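/- Let λ₁ ≥ λ₂ ≥ … ≥ λ_l > 0 and suppose w : ℂ^l → ℂ^l is an entire map with w(0) = 0 satisfying λ_i·w^i = Σ_j λ_j·z^j·∂w^i/∂z^j for all i. Then w is an upper-triangular polynomial map: w(z) = A(z) + G(z), where A is linear and each G_i depends only on the variables z^{i+1}, …, z^l. -/

import Mathlib

open Complex Finset Metric

namespace Stmt8Merged

variable {l : ℕ}


variable {l : ℕ}

noncomputable def Dm (lam : Fin l → ℝ) (t : ℂ) (z : Fin l → ℂ) : Fin l → ℂ :=
  fun j => Complex.exp (t * lam j) * z j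

lemma Dm_zero (lam : Fin l → ℝ) (z : Fin l → ℂ) : Dm lam 0 z = z := by
  funext j; simp [Dm]

lemma hwc {w : (Fin l → ℂ) → Fin l → ℂ} (hw : Differentiable ℂ w) (i : Fin l) :
    Differentiable ℂ (fun z => w z i) :=
  (ContinuousLinearMap.proj (R := ℂ) (φ := fun _ : Fin l => ℂ) i).differentiable.comp hw

lemma homog {lam : Fin l → ℝ} {w : (Fin l → ℂ) → Fin l → ℂ}
    (hw : Differentiable ℂ w)
    (heq : ∀ (i : Fin l) (z : Fin l → ℂ),
      (lam i : ℂ) * w z i =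
        ∑ j : Fin l, (lam j : ℂ) * z j * fderiv ℂ w z (Pi.single j 1) i)
    (i : Fin l) (z : Fin l → ℂ) (t : ℂ) :
    w (Dm lam t z) i = Complex.exp (t * lam i) * w z i := by
  set F : ℂ → ℂ := fun t => Complex.exp (-(t * lam i)) * w (Dm lam t z) i with hF
  have key : ∀ t : ℂ, HasDerivAt F 0 t := by
    intro t
    -- derivative of the scaling curve
    have hcurve : HasDerivAt (fun t : ℂ => Dm lam t z)
        (fun j => Complex.exp (t * lam j) * ((lam j : ℂ) * z j)) t := by
      rw [hasDerivAt_pi]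
      intro j
      have h1 : HasDerivAt (fun t : ℂ => t * (lam j : ℂ)) (lam j : ℂ) t :=
        hasDerivAt_mul_const _
      have h2 : HasDerivAt (fun t : ℂ => Complex.exp (t * lam j))
          (Complex.exp (t * lam j) * (lam j : ℂ)) t := h1.cexp
      have h3 := h2.mul_const (z j)
      convert h3 using 1
      all_goals first | rfl | ring
    have hwA : HasFDerivAt w (fderiv ℂ w (Dm lam t z)) (Dm lam t z) :=
      (hw (Dm lam t z)).hasFDerivAt
    have hcomp : HasDerivAt (fun t : ℂ => w (Dm lam t z))
        (fderiv ℂ w (Dm lam t z) (fun j => Complex.exp (t * lam j) * ((lam j : ℂ) * z j))) t :=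
      hwA.comp_hasDerivAt t hcurve
    have hcompi : HasDerivAt (fun t : ℂ => w (Dm lam t z) i)
        (fderiv ℂ w (Dm lam t z) (fun j => Complex.exp (t * lam j) * ((lam j : ℂ) * z j)) i) t :=
      (hasDerivAt_pi.mp hcomp) i
    -- identify the derivative using heq
    have hvec : (fun j => Complex.exp (t * lam j) * ((lam j : ℂ) * z j)) =
        ∑ j : Fin l, (Complex.exp (t * lam j) * ((lam j : ℂ) * z j)) • (Pi.single j 1 : Fin l → ℂ) := by
      funext k
      rw [Finset.sum_apply]
      simp [Pi.single_apply]
    have hkey : fderiv ℂ w (Dm lam t z) (fun j => Complex.exp (t * lam j) * ((lam j : ℂ) * z j)) i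
        = (lam i : ℂ) * w (Dm lam t z) i := by
      rw [hvec, map_sum]
      rw [Finset.sum_apply]
      rw [heq i (Dm lam t z)]
      refine Finset.sum_congr rfl fun j _ => ?_
      rw [map_smul]
      simp only [Pi.smul_apply, smul_eq_mul, Dm]
      ring
    have hd : HasDerivAt F
        (-(lam i : ℂ) * Complex.exp (-(t * lam i)) * w (Dm lam t z) i
          + Complex.exp (-(t * lam i)) * ((lam i : ℂ) * w (Dm lam t z) i)) t := by
      have he : HasDerivAt (fun t : ℂ => Complex.exp (-(t * lam i)))
          (-(lam i : ℂ) * Complex.exp (-(t * lam i))) t := by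
        have h1 : HasDerivAt (fun t : ℂ => -(t * (lam i : ℂ))) (-(lam i : ℂ)) t :=
          (hasDerivAt_mul_const _).neg
        have := h1.cexp
        convert this using 1
        all_goals first | rfl | ring
      have h5 := he.mul hcompi
      rw [hkey] at h5
      exact h5
      try ring
    have : -(lam i : ℂ) * Complex.exp (-(t * lam i)) * w (Dm lam t z) i
          + Complex.exp (-(t * lam i)) * ((lam i : ℂ) * w (Dm lam t z) i) = 0 := by ring
    rwa [this] at hd
  have hconst : F t = F 0 := by
    apply is_const_of_fderiv_eq_zero (𝕜 := ℂ) (fun x => (key x).differentiableAt)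
    intro x
    have := (key x).hasFDerivAt.fderiv
    rw [this]
    ext
    simp
  rw [hF] at hconst
  simp only [Dm_zero, neg_zero, zero_mul, Complex.exp_zero, one_mul] at hconst
  have hne : Complex.exp (-(t * lam i)) ≠ 0 := Complex.exp_ne_zero _
  field_simp [Complex.exp_neg] at hconst
  rw [← hconst, ← mul_assoc, ← Complex.exp_add]
  simp



variable {l : ℕ}


lemma entireIter {f : ℂ → ℂ} (hf : Differentiable ℂ f) (n : ℕ) :
    Differentiable ℂ (iteratedDeriv n f) := by
  induction n with
  | zero => simpa [iteratedDeriv_zero] using hf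
  | succ n ih =>
    rw [iteratedDeriv_succ]
    exact analyticOnNhd_univ_iff_differentiable.mp
      ((analyticOnNhd_univ_iff_differentiable.mpr ih).deriv)

noncomputable def hl (w : (Fin l → ℂ) → Fin l → ℂ) (i j : Fin l) (n : ℕ)
    (x : Fin l → ℂ) : ℂ :=
  iteratedDeriv n (fun s : ℂ => w (x + s • (Pi.single j 1 : Fin l → ℂ)) i) 0


lemma lineDiff {w : (Fin l → ℂ) → Fin l → ℂ} (hw : Differentiable ℂ w) (i j : Fin l)
    (x : Fin l → ℂ) :
    Differentiable ℂ (fun s : ℂ => w (x + s • (Pi.single j 1 : Fin l → ℂ)) i) :=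
  (hwc hw i).comp ((differentiable_const x).add (differentiable_id.smul_const _))

lemma hl_shift (w : (Fin l → ℂ) → Fin l → ℂ) (i j : Fin l) (n : ℕ) (x : Fin l → ℂ) (s₀ : ℂ) :
    hl w i j n (x + s₀ • (Pi.single j 1 : Fin l → ℂ)) =
      iteratedDeriv n (fun s : ℂ => w (x + s • (Pi.single j 1 : Fin l → ℂ)) i) s₀ := by
  have hfun : (fun s : ℂ => w ((x + s₀ • (Pi.single j 1 : Fin l → ℂ)) + s • (Pi.single j 1 : Fin l → ℂ)) i)
      = fun s : ℂ => (fun u : ℂ => w (x + u • (Pi.single j 1 : Fin l → ℂ)) i) (s₀ + s) := by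
    funext s
    rw [add_assoc, ← add_smul]
  rw [hl, hfun]
  have h2 := congrFun (iteratedDeriv_comp_const_add n
    (fun u : ℂ => w (x + u • (Pi.single j 1 : Fin l → ℂ)) i) s₀) 0
  simpa using h2

lemma hl_zero (w : (Fin l → ℂ) → Fin l → ℂ) (i j : Fin l) (x : Fin l → ℂ) :
    hl w i j 0 x = w x i := by
  simp [hl, iteratedDeriv_zero]

lemma hl_succ (w : (Fin l → ℂ) → Fin l → ℂ) (i j : Fin l) (n : ℕ) (x : Fin l → ℂ) :
    hl w i j (n + 1) x = deriv (fun s : ℂ => hl w i j n (x + s • (Pi.single j 1 : Fin l → ℂ))) 0 := by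
  have hfun : (fun s : ℂ => hl w i j n (x + s • (Pi.single j 1 : Fin l → ℂ)))
      = iteratedDeriv n (fun s : ℂ => w (x + s • (Pi.single j 1 : Fin l → ℂ)) i) :=
    funext fun s => hl_shift w i j n x s
  rw [hfun, hl, iteratedDeriv_succ]


lemma hl_homog {lam : Fin l → ℝ} {w : (Fin l → ℂ) → Fin l → ℂ} (hw : Differentiable ℂ w)
    (hhom : ∀ (i : Fin l) (z : Fin l → ℂ) (t : ℂ), w (Dm lam t z) i = Complex.exp (t * lam i) * w z i)
    (i j : Fin l) (n : ℕ) (z : Fin l → ℂ) (t : ℂ) :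
    hl w i j n (Dm lam t z) = Complex.exp (t * ((lam i : ℂ) - n * lam j)) * hl w i j n z := by
  induction n generalizing z with
  | zero =>
    rw [hl_zero, hl_zero, hhom i z t]
    norm_num
  | succ n ih =>
    have hexp1 : Complex.exp (t * lam j) * Complex.exp (-(t * lam j)) = 1 := by
      rw [← Complex.exp_add]; simp
    have hsplit : ∀ s : ℂ, Dm lam t z + s • (Pi.single j 1 : Fin l → ℂ)
        = Dm lam t (z + (s * Complex.exp (-(t * lam j))) • (Pi.single j 1 : Fin l → ℂ)) := by
      intro s; funext k
      simp only [Dm, Pi.add_apply, Pi.smul_apply, Pi.single_apply, smul_eq_mul]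
      rcases eq_or_ne k j with rfl | hkj
      · simp only [eq_self_iff_true, if_true, mul_one]
        linear_combination (-s) * hexp1
      · simp [hkj]
    set φ : ℂ → ℂ := iteratedDeriv n (fun s : ℂ => w (z + s • (Pi.single j 1 : Fin l → ℂ)) i) with hφ
    have hφd : Differentiable ℂ φ := entireIter (lineDiff hw i j z) n
    set c : ℂ := Complex.exp (-(t * lam j)) with hc
    have hinner : (fun s : ℂ => hl w i j n (Dm lam t z + s • (Pi.single j 1 : Fin l → ℂ)))
        = fun s : ℂ => Complex.exp (t * ((lam i : ℂ) - n * lam j)) * φ (s * c) := by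
      funext s
      rw [hsplit s, ih, hl_shift]
    have hφc : HasDerivAt (fun s : ℂ => φ (s * c)) (deriv φ 0 * c) 0 := by
      have h1 : HasDerivAt φ (deriv φ (0 * c)) (0 * c) := (hφd _).hasDerivAt
      have h2 : HasDerivAt (fun s : ℂ => s * c) c 0 := hasDerivAt_mul_const c
      have h3 := h1.comp 0 h2
      simp only [zero_mul] at h3; exact h3
    have hfull : HasDerivAt (fun s : ℂ => Complex.exp (t * ((lam i : ℂ) - n * lam j)) * φ (s * c))
        (Complex.exp (t * ((lam i : ℂ) - n * lam j)) * (deriv φ 0 * c)) 0 := hφc.const_mul _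
    have hder : deriv φ 0 = hl w i j (n + 1) z := by
      rw [hl, iteratedDeriv_succ, hφ]
    rw [hl_succ, hinner, hfull.deriv, hder, ← mul_assoc, mul_comm _ c, ← mul_assoc]
    congr 1
    rw [hc, mul_comm c, ← Complex.exp_add]
    congr 1
    push_cast
    ring

lemma hl_bound {w : (Fin l → ℂ) → Fin l → ℂ} (hw : Differentiable ℂ w) (i j : Fin l) :
    ∀ (n : ℕ) (x : Fin l → ℂ) (C : ℝ),
      (∀ s : ℂ, ‖s‖ ≤ (n : ℝ) → ‖w (x + s • (Pi.single j 1 : Fin l → ℂ)) i‖ ≤ C) →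
      ‖hl w i j n x‖ ≤ C := by
  intro n
  induction n with
  | zero =>
    intro x C hC
    rw [hl_zero]
    have := hC 0 (by simp)
    simpa using this
  | succ n ih =>
    intro x C hC
    set φ : ℂ → ℂ := iteratedDeriv n (fun s : ℂ => w (x + s • (Pi.single j 1 : Fin l → ℂ)) i) with hφ
    have hφd : Differentiable ℂ φ := entireIter (lineDiff hw i j x) n
    have hder : hl w i j (n + 1) x = deriv φ 0 := by
      rw [hl, iteratedDeriv_succ, hφ]
    have hb := Complex.norm_deriv_le_of_forall_mem_sphere_norm_le (c := 0) (R := 1) (C := C)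
      one_pos hφd.diffContOnCl ?_
    · rw [hder]; simpa using hb
    · intro s₀ hs₀
      have hs₀n : ‖s₀‖ = 1 := by simpa [mem_sphere_iff_norm] using hs₀
      have : φ s₀ = hl w i j n (x + s₀ • (Pi.single j 1 : Fin l → ℂ)) := (hl_shift w i j n x s₀).symm
      rw [this]
      apply ih
      intro s hs
      have harr : (x + s₀ • (Pi.single j 1 : Fin l → ℂ)) + s • (Pi.single j 1 : Fin l → ℂ)
          = x + (s₀ + s) • (Pi.single j 1 : Fin l → ℂ) := by
        rw [add_assoc, ← add_smul]
      rw [harr]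
      apply hC
      calc ‖s₀ + s‖ ≤ ‖s₀‖ + ‖s‖ := norm_add_le _ _
        _ ≤ 1 + n := by rw [hs₀n]; linarith
        _ = ((n + 1 : ℕ) : ℝ) := by push_cast; ring

lemma norm_single_le {j : Fin l} : ‖(Pi.single j 1 : Fin l → ℂ)‖ ≤ 1 := by
  apply pi_norm_le_iff_of_nonneg zero_le_one |>.mpr
  intro k
  rw [Pi.single_apply]
  split_ifs <;> simp

lemma hl_vanish {lam : Fin l → ℝ} {w : (Fin l → ℂ) → Fin l → ℂ}
    (hpos : ∀ i, 0 < lam i) (hw : Differentiable ℂ w)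
    (hhom : ∀ (i : Fin l) (z : Fin l → ℂ) (t : ℂ), w (Dm lam t z) i = Complex.exp (t * lam i) * w z i)
    (i j : Fin l) (n : ℕ) (hneg : lam i - n * lam j < 0) (z : Fin l → ℂ) :
    hl w i j n z = 0 := by
  set K := Metric.closedBall (0 : Fin l → ℂ) (‖z‖ + n) with hK
  have hKc : IsCompact K := isCompact_closedBall _ _
  obtain ⟨C, hC⟩ := hKc.exists_bound_of_continuousOn ((hwc hw i).continuous.continuousOn)
  have hC0 : 0 ≤ C := le_trans (norm_nonneg _) (hC 0 (by simp [hK]; positivity))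
  have hDmle : ∀ t : ℝ, t ≤ 0 → ‖Dm lam (t : ℂ) z‖ ≤ ‖z‖ := by
    intro t ht
    apply pi_norm_le_iff_of_nonneg (norm_nonneg z) |>.mpr
    intro k
    have : ((t : ℂ) * (lam k : ℂ)) = ((t * lam k : ℝ) : ℂ) := by push_cast; ring
    have hexp : ‖Complex.exp ((t : ℂ) * lam k)‖ ≤ 1 := by
      rw [this, Complex.norm_exp]
      simp only [Complex.ofReal_re]
      exact Real.exp_le_one_iff.mpr (mul_nonpos_of_nonpos_of_nonneg ht (hpos k).le)
    calc ‖Dm lam (t : ℂ) z k‖ = ‖Complex.exp ((t : ℂ) * lam k)‖ * ‖z k‖ := norm_mul _ _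
      _ ≤ 1 * ‖z‖ := mul_le_mul hexp (norm_le_pi_norm z k) (norm_nonneg _) zero_le_one
      _ = ‖z‖ := one_mul _
  have hbd : ∀ t : ℝ, t ≤ 0 → ‖hl w i j n (Dm lam (t : ℂ) z)‖ ≤ C := by
    intro t ht
    apply hl_bound hw i j n _ C
    intro s hs
    apply hC
    rw [hK, mem_closedBall_zero_iff]
    calc ‖Dm lam (t : ℂ) z + s • (Pi.single j 1 : Fin l → ℂ)‖
        ≤ ‖Dm lam (t : ℂ) z‖ + ‖s • (Pi.single j 1 : Fin l → ℂ)‖ := norm_add_le _ _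
      _ ≤ ‖z‖ + ‖s‖ * 1 := by
          refine add_le_add (hDmle t ht) ?_
          rw [norm_smul]
          exact mul_le_mul_of_nonneg_left norm_single_le (norm_nonneg s)
      _ ≤ ‖z‖ + n := by rw [mul_one]; linarith
  by_contra hne
  have hpos' : 0 < ‖hl w i j n z‖ := norm_pos_iff.mpr hne
  set μ : ℝ := lam i - n * lam j with hμ
  have hμneg : μ < 0 := hneg
  have hident : ∀ t : ℝ, ‖hl w i j n (Dm lam (t : ℂ) z)‖ = Real.exp (t * μ) * ‖hl w i j n z‖ := by
    intro t
    rw [hl_homog hw hhom i j n z (t : ℂ), norm_mul]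
    congr 1
    have : ((t : ℂ) * ((lam i : ℂ) - n * lam j)) = ((t * μ : ℝ) : ℂ) := by
      rw [hμ]; push_cast; ring
    rw [this, Complex.norm_exp]
    simp
  set t₀ : ℝ := min (Real.log ((C + 1) / ‖hl w i j n z‖) / μ) 0 with ht₀
  have ht₀0 : t₀ ≤ 0 := min_le_right _ _
  have hge : Real.log ((C + 1) / ‖hl w i j n z‖) ≤ t₀ * μ := by
    have h1 : t₀ ≤ Real.log ((C + 1) / ‖hl w i j n z‖) / μ := min_le_left _ _
    calc Real.log ((C + 1) / ‖hl w i j n z‖)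
        = (Real.log ((C + 1) / ‖hl w i j n z‖) / μ) * μ := by
          rw [div_mul_cancel₀ _ hμneg.ne]
      _ ≤ t₀ * μ := by
          apply mul_le_mul_of_nonpos_right h1 hμneg.le
  have hgt : (C + 1) / ‖hl w i j n z‖ ≤ Real.exp (t₀ * μ) := by
    calc (C + 1) / ‖hl w i j n z‖
        = Real.exp (Real.log ((C + 1) / ‖hl w i j n z‖)) := by
          rw [Real.exp_log]; positivity
      _ ≤ Real.exp (t₀ * μ) := Real.exp_le_exp.mpr hge
  have hfin : C + 1 ≤ C := by
    have h2 := hbd t₀ ht₀0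
    rw [hident t₀] at h2
    have h3 : (C + 1) / ‖hl w i j n z‖ * ‖hl w i j n z‖ ≤ Real.exp (t₀ * μ) * ‖hl w i j n z‖ :=
      mul_le_mul_of_nonneg_right hgt hpos'.le
    rw [div_mul_cancel₀] at h3
    · linarith
    · exact hpos'.ne'
  linarith


variable {l : ℕ}



lemma taylor_fin {w : (Fin l → ℂ) → Fin l → ℂ} (hw : Differentiable ℂ w) (i j : Fin l)
    (N : ℕ) (hvan : ∀ n : ℕ, N ≤ n → ∀ x, hl w i j n x = 0) (x : Fin l → ℂ) (s : ℂ) :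
    w (x + s • (Pi.single j 1 : Fin l → ℂ)) i
      = ∑ n ∈ Finset.range N, ((n.factorial : ℂ))⁻¹ * hl w i j n x * s ^ n := by
  have hsum := Complex.hasSum_taylorSeries_of_entire (lineDiff hw i j x) 0 s
  have hterm : (fun n : ℕ => ((n.factorial : ℂ))⁻¹ • (s - 0) ^ n •
        iteratedDeriv n (fun s : ℂ => w (x + s • (Pi.single j 1 : Fin l → ℂ)) i) 0)
      = fun n : ℕ => ((n.factorial : ℂ))⁻¹ * hl w i j n x * s ^ n := by
    funext n
    rw [hl]
    simp only [sub_zero, smul_eq_mul]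
    ring
  rw [hterm] at hsum
  have h0 : ∀ n ∉ Finset.range N, ((n.factorial : ℂ))⁻¹ * hl w i j n x * s ^ n = 0 := by
    intro n hn
    rw [hvan n (by simpa using hn) x]
    ring
  exact hsum.unique (hasSum_sum_of_ne_finset_zero h0)

lemma v_ident {w : (Fin l → ℂ) → Fin l → ℂ} (hw : Differentiable ℂ w) (i j : Fin l)
    (N : ℕ) (hvan : ∀ n : ℕ, N ≤ n → ∀ x, hl w i j n x = 0) (x : Fin l → ℂ) :
    w x i = ∑ k ∈ Finset.range N,
      Polynomial.eval (x j) (Lagrange.basis (Finset.range N) (fun m : ℕ => (m : ℂ)) k)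
        * w (Function.update x j (k : ℂ)) i := by
  set x' : Fin l → ℂ := Function.update x j 0 with hx'
  have hx : ∀ s : ℂ, Function.update x j s = x' + s • (Pi.single j 1 : Fin l → ℂ) := by
    intro s; funext k
    rcases eq_or_ne k j with rfl | hkj
    · simp [hx', Function.update_self, Pi.single_apply]
    · simp [hx', Function.update_apply, hkj, Pi.single_apply]
  set q : Polynomial ℂ := ∑ n ∈ Finset.range N,
      Polynomial.C ((n.factorial : ℂ)⁻¹ * hl w i j n x') * Polynomial.X ^ n with hqdef
  have hq : ∀ s : ℂ, q.eval s = w (Function.update x j s) i := by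
    intro s
    rw [hx s, taylor_fin hw i j N hvan x' s, hqdef]
    rw [Polynomial.eval_finset_sum]
    refine Finset.sum_congr rfl fun n _ => ?_
    simp [Polynomial.eval_mul, Polynomial.eval_C, Polynomial.eval_pow]
  have hdegLT : q ∈ Polynomial.degreeLT ℂ N := by
    rw [hqdef]
    refine Submodule.sum_mem _ fun n hn => ?_
    rw [Polynomial.mem_degreeLT]
    exact lt_of_le_of_lt (Polynomial.degree_C_mul_X_pow_le _ _)
      (by exact_mod_cast Finset.mem_range.mp hn)
  have hdeg : q.degree < (Finset.range N).card := by
    simpa [Finset.card_range] using Polynomial.mem_degreeLT.mp hdegLT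
  have hvs : Set.InjOn (fun m : ℕ => (m : ℂ)) ↑(Finset.range N) :=
    fun a _ b _ hab => Nat.cast_injective hab
  have hInterp := Lagrange.eq_interpolate hvs hdeg
  calc w x i = q.eval (x j) := by rw [hq (x j), Function.update_eq_self]
    _ = Polynomial.eval (x j)
        ((Lagrange.interpolate (Finset.range N) (fun m : ℕ => (m : ℂ)))
          fun k => Polynomial.eval ((k : ℕ) : ℂ) q) := by rw [← hInterp]
    _ = _ := by
        rw [Lagrange.interpolate_apply, Polynomial.eval_finset_sum]
        refine Finset.sum_congr rfl fun k _ => ?_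
        rw [Polynomial.eval_mul, Polynomial.eval_C, hq ((k : ℕ) : ℂ), mul_comm]

variable {l : ℕ}

noncomputable def lMv (N : ℕ) (j : Fin l) (k : ℕ) : MvPolynomial (Fin l) ℂ :=
  Polynomial.eval₂ (MvPolynomial.C : ℂ →+* MvPolynomial (Fin l) ℂ) (MvPolynomial.X j)
    (Lagrange.basis (Finset.range N) (fun m : ℕ => (m : ℂ)) k)

lemma eval_lMv (N : ℕ) (j : Fin l) (k : ℕ) (x : Fin l → ℂ) :
    MvPolynomial.eval x (lMv N j k)
      = Polynomial.eval (x j) (Lagrange.basis (Finset.range N) (fun m : ℕ => (m : ℂ)) k) := by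
  rw [lMv, Polynomial.hom_eval₂]
  have h1 : (MvPolynomial.eval x).comp (MvPolynomial.C : ℂ →+* MvPolynomial (Fin l) ℂ)
      = RingHom.id ℂ := by
    ext r; simp
  rw [h1, MvPolynomial.eval_X]
  rfl

lemma exists_poly (N : ℕ) (hN0 : 0 < N) {w : (Fin l → ℂ) → Fin l → ℂ} (i : Fin l)
    (hv : ∀ (j : Fin l) (x : Fin l → ℂ),
      w x i = ∑ k ∈ Finset.range N,
        Polynomial.eval (x j) (Lagrange.basis (Finset.range N) (fun m : ℕ => (m : ℂ)) k)
          * w (Function.update x j ((k : ℕ) : ℂ)) i) :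
    ∃ p : MvPolynomial (Fin l) ℂ, ∀ x, w x i = MvPolynomial.eval x p := by
  classical
  set v : ℕ → ℂ := fun m => (m : ℂ) with hv'
  set B : ℕ → Polynomial ℂ := fun k => Lagrange.basis (Finset.range N) v k with hB
  have hvs : Set.InjOn v ↑(Finset.range N) := fun a _ b _ hab => Nat.cast_injective hab
  set p : MvPolynomial (Fin l) ℂ :=
    ∑ a ∈ Fintype.piFinset (fun _ : Fin l => Finset.range N),
      MvPolynomial.C (w (fun j => v (a j)) i) * ∏ j : Fin l, lMv N j (a j) with hp
  have hevalp : ∀ x, MvPolynomial.eval x p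
      = ∑ a ∈ Fintype.piFinset (fun _ : Fin l => Finset.range N),
          w (fun j => v (a j)) i * ∏ j : Fin l, Polynomial.eval (x j) (B (a j)) := by
    intro x
    rw [hp, map_sum]
    refine Finset.sum_congr rfl fun a _ => ?_
    rw [map_mul, MvPolynomial.eval_C, map_prod]
    congr 1
    exact Finset.prod_congr rfl fun j _ => eval_lMv N j (a j) x
  suffices H : ∀ m : ℕ, ∀ x : Fin l → ℂ,
      (∀ j : Fin l, m ≤ (j : ℕ) → ∃ k, k ∈ Finset.range N ∧ x j = v k) →
      MvPolynomial.eval x p = w x i by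
    exact ⟨p, fun x => (H l x (fun j hj => absurd j.isLt (not_lt.mpr hj))).symm⟩
  intro m
  induction m with
  | zero =>
    intro x hx
    choose b hb1 hb2 using fun j => hx j (Nat.zero_le _)
    have hxb : x = fun j => v (b j) := funext fun j => hb2 j
    have hbmem : b ∈ Fintype.piFinset (fun _ : Fin l => Finset.range N) := by
      rw [Fintype.mem_piFinset]; exact hb1
    rw [hevalp, hxb]
    rw [Finset.sum_eq_single_of_mem b hbmem ?side]
    · have hone : ∀ j : Fin l, Polynomial.eval (v (b j)) (B (b j)) = 1 := fun j =>
        Lagrange.eval_basis_self hvs (hb1 j)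
      rw [Finset.prod_congr rfl (fun j _ => hone j), Finset.prod_const_one, mul_one]
    case side =>
      intro a ha hab
      obtain ⟨j₀, hj₀⟩ : ∃ j₀, a j₀ ≠ b j₀ := by
        by_contra h; push_neg at h; exact hab (funext h)
      have hzero : Polynomial.eval (v (b j₀)) (B (a j₀)) = 0 :=
        Lagrange.eval_basis_of_ne hj₀ (hb1 j₀)
      rw [Finset.prod_eq_zero (Finset.mem_univ j₀) hzero, mul_zero]
  | succ m ih =>
    intro x hx
    by_cases hml : m < l
    · set jm : Fin l := ⟨m, hml⟩ with hjm
      set Φ : Polynomial ℂ := ∑ a ∈ Fintype.piFinset (fun _ : Fin l => Finset.range N),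
        (w (fun j => v (a j)) i * ∏ j ∈ Finset.univ.erase jm, Polynomial.eval (x j) (B (a j)))
          • B (a jm) with hΦdef
      set Ψ : Polynomial ℂ := ∑ k ∈ Finset.range N,
        (w (Function.update x jm (v k)) i) • B k with hΨdef
      have hamem : ∀ a ∈ Fintype.piFinset (fun _ : Fin l => Finset.range N),
          a jm ∈ Finset.range N := fun a ha => (Fintype.mem_piFinset.mp ha) jm
      have hΨeval : ∀ s : ℂ, Ψ.eval s = w (Function.update x jm s) i := by
        intro s
        rw [hΨdef, Polynomial.eval_finset_sum]
        rw [hv jm (Function.update x jm s)]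
        refine Finset.sum_congr rfl fun k hk => ?_
        rw [Polynomial.eval_smul, Function.update_idem, Function.update_self, smul_eq_mul,
          mul_comm]
      have hΦeval : ∀ s : ℂ, Φ.eval s = MvPolynomial.eval (Function.update x jm s) p := by
        intro s
        rw [hΦdef, Polynomial.eval_finset_sum, hevalp]
        refine Finset.sum_congr rfl fun a ha => ?_
        rw [Polynomial.eval_smul, smul_eq_mul]
        have hsplit : ∏ j : Fin l, Polynomial.eval ((Function.update x jm s) j) (B (a j))
            = Polynomial.eval s (B (a jm))
              * ∏ j ∈ Finset.univ.erase jm, Polynomial.eval (x j) (B (a j)) := by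
          rw [← Finset.mul_prod_erase Finset.univ _ (Finset.mem_univ jm)]
          congr 1
          · rw [Function.update_self]
          · refine Finset.prod_congr rfl fun j hj => ?_
            rw [Function.update_of_ne (Finset.mem_erase.mp hj).1]
        rw [hsplit]; ring
      have hdegΦ : Φ.degree < (Finset.range N).card := by
        rw [Finset.card_range]
        have hmem : Φ ∈ Polynomial.degreeLT ℂ N := by
          rw [hΦdef]
          refine Submodule.sum_mem _ fun a ha => ?_
          rw [Polynomial.mem_degreeLT]
          refine lt_of_le_of_lt (Polynomial.degree_smul_le _ _) ?_
          rw [hB, Lagrange.degree_basis hvs (hamem a ha), Finset.card_range]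
          exact_mod_cast Nat.sub_lt hN0 one_pos
        exact Polynomial.mem_degreeLT.mp hmem
      have hdegΨ : Ψ.degree < (Finset.range N).card := by
        rw [Finset.card_range]
        have hmem : Ψ ∈ Polynomial.degreeLT ℂ N := by
          rw [hΨdef]
          refine Submodule.sum_mem _ fun k hk => ?_
          rw [Polynomial.mem_degreeLT]
          refine lt_of_le_of_lt (Polynomial.degree_smul_le _ _) ?_
          rw [hB, Lagrange.degree_basis hvs hk, Finset.card_range]
          exact_mod_cast Nat.sub_lt hN0 one_pos
        exact Polynomial.mem_degreeLT.mp hmem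
      have hnodes : ∀ k ∈ Finset.range N, Φ.eval (v k) = Ψ.eval (v k) := by
        intro k hk
        rw [hΦeval, hΨeval]
        apply ih
        intro j hj
        rcases eq_or_ne j jm with rfl | hne
        · exact ⟨k, hk, by rw [Function.update_self]⟩
        · have hj' : m + 1 ≤ (j : ℕ) := by
            have hjne : (j : ℕ) ≠ m := fun h => hne (Fin.ext (by simp [hjm, h]))
            omega
          obtain ⟨k', hk', hxk'⟩ := hx j hj'
          exact ⟨k', hk', by rwa [Function.update_of_ne hne]⟩
      have hΦΨ : Φ = Ψ := Polynomial.eq_of_degrees_lt_of_eval_index_eq _ hvs hdegΦ hdegΨ hnodes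
      calc MvPolynomial.eval x p = MvPolynomial.eval (Function.update x jm (x jm)) p := by
            rw [Function.update_eq_self]
        _ = Φ.eval (x jm) := (hΦeval (x jm)).symm
        _ = Ψ.eval (x jm) := by rw [hΦΨ]
        _ = w (Function.update x jm (x jm)) i := hΨeval (x jm)
        _ = w x i := by rw [Function.update_eq_self]
    · apply ih
      intro j hj
      exact hx j (by omega)

variable {l : ℕ}

lemma coeff_weight (lam : Fin l → ℝ) (i : Fin l) (P : MvPolynomial (Fin l) ℂ)
    (hhomP : ∀ z : Fin l → ℂ,
      MvPolynomial.eval (fun j => Complex.exp (lam j) * z j) P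
        = Complex.exp (lam i) * MvPolynomial.eval z P)
    (m : Fin l →₀ ℕ) (hm : MvPolynomial.coeff m P ≠ 0) :
    ∑ j : Fin l, (m j : ℝ) * lam j = lam i := by
  classical
  set c : Fin l → ℂ := fun j => Complex.exp (lam j) with hc
  set S : MvPolynomial (Fin l) ℂ :=
    MvPolynomial.bind₁ (fun j => MvPolynomial.C (c j) * MvPolynomial.X j) P with hS
  have hSeval : ∀ z : Fin l → ℂ,
      MvPolynomial.eval z S = MvPolynomial.eval (fun j => c j * z j) P := by
    intro z
    have h := MvPolynomial.eval₂Hom_bind₁ (RingHom.id ℂ) z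
      (fun j => MvPolynomial.C (c j) * MvPolynomial.X j) P
    simpa using h
  have hSsum : S = ∑ d ∈ P.support,
      MvPolynomial.monomial d (MvPolynomial.coeff d P * ∏ j ∈ d.support, c j ^ d j) := by
    rw [hS]
    conv_lhs => rw [← MvPolynomial.support_sum_monomial_coeff P]
    rw [map_sum]
    refine Finset.sum_congr rfl fun d hd => ?_
    rw [MvPolynomial.bind₁_monomial, MvPolynomial.monomial_eq]
    have h1 : ∏ j ∈ d.support, (MvPolynomial.C (c j) * MvPolynomial.X j) ^ d j
        = MvPolynomial.C (∏ j ∈ d.support, c j ^ d j)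
          * ∏ j ∈ d.support, MvPolynomial.X j ^ d j := by
      rw [map_prod, ← Finset.prod_mul_distrib]
      refine Finset.prod_congr rfl fun j hj => ?_
      rw [mul_pow, map_pow]
    rw [h1, Finsupp.prod, map_mul]
    ring
  have hcoeff : MvPolynomial.coeff m S
      = MvPolynomial.coeff m P * ∏ j ∈ m.support, c j ^ m j := by
    rw [hSsum, MvPolynomial.coeff_sum]
    have h2 := Finset.sum_eq_single (s := P.support)
      (f := fun d => MvPolynomial.coeff m
        (MvPolynomial.monomial d (MvPolynomial.coeff d P * ∏ j ∈ d.support, c j ^ d j)))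
      m ?_ ?_
    · rw [h2, MvPolynomial.coeff_monomial, if_pos rfl]
    · intro d _ hdm
      simp only [MvPolynomial.coeff_monomial, if_neg hdm]
    · intro hmn
      simp [MvPolynomial.coeff_monomial,
        MvPolynomial.notMem_support_iff.mp hmn]
  have hSC : S = MvPolynomial.C (Complex.exp (lam i)) * P := by
    apply MvPolynomial.funext
    intro z
    rw [hSeval z, hhomP z, map_mul, MvPolynomial.eval_C]
  have hkey : MvPolynomial.coeff m P * ∏ j ∈ m.support, c j ^ m j
      = Complex.exp (lam i) * MvPolynomial.coeff m P := by
    rw [← hcoeff, hSC, MvPolynomial.coeff_C_mul]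
  have hprod : ∏ j ∈ m.support, c j ^ m j = Complex.exp (lam i) := by
    have h3 : MvPolynomial.coeff m P * (∏ j ∈ m.support, c j ^ m j)
        = MvPolynomial.coeff m P * Complex.exp (lam i) := by
      rw [hkey]; ring
    exact mul_left_cancel₀ hm h3
  have hexp : ∏ j ∈ m.support, c j ^ m j
      = Complex.exp (((∑ j ∈ m.support, (m j : ℝ) * lam j : ℝ) : ℂ)) := by
    have h4 : ∀ j ∈ m.support, c j ^ m j = Complex.exp ((m j : ℂ) * lam j) := fun j _ =>
      (Complex.exp_nat_mul _ _).symm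
    rw [Finset.prod_congr rfl h4, ← Complex.exp_sum]
    congr 1
    push_cast
    rfl
  have hAB : (∑ j ∈ m.support, (m j : ℝ) * lam j) = lam i := by
    rw [hexp] at hprod
    have h5 : ((Real.exp (∑ j ∈ m.support, (m j : ℝ) * lam j) : ℝ) : ℂ)
        = ((Real.exp (lam i) : ℝ) : ℂ) := by
      rw [Complex.ofReal_exp, Complex.ofReal_exp, hprod]
    exact Real.exp_eq_exp.mp (Complex.ofReal_inj.mp h5)
  rw [← hAB]
  symm
  apply Finset.sum_subset (Finset.subset_univ _)
  intro j _ hj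
  rw [Finsupp.notMem_support_iff.mp hj]
  norm_num

end Stmt8Merged

open Stmt8Merged


theorem stmt_8 (l : ℕ) (lam : Fin l → ℝ)
    (hpos : ∀ i, 0 < lam i)
    (hdec : ∀ i j : Fin l, i ≤ j → lam j ≤ lam i)
    (w : (Fin l → ℂ) → Fin l → ℂ)
    (hw : Differentiable ℂ w) (hw0 : w 0 = 0)
    (heq : ∀ (i : Fin l) (z : Fin l → ℂ),
      (lam i : ℂ) * w z i =
        ∑ j : Fin l, (lam j : ℂ) * z j * fderiv ℂ w z (Pi.single j 1) i) :
    ∃ (A : (Fin l → ℂ) →ₗ[ℂ] (Fin l → ℂ)) (G : (Fin l → ℂ) → Fin l → ℂ),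
      (∀ z, w z = A z + G z) ∧
      (∀ i, ∃ p : MvPolynomial (Fin l) ℂ, ∀ z, G z i = MvPolynomial.eval z p) ∧
      (∀ (i : Fin l) (z z' : Fin l → ℂ),
        (∀ j : Fin l, i < j → z j = z' j) → G z i = G z' i) := by
  classical
  rcases Nat.eq_zero_or_pos l with hl0 | hlpos
  · subst hl0
    exact ⟨0, w, fun z => funext fun i => i.elim0, fun i => i.elim0, fun i => i.elim0⟩
  have hhom : ∀ (i : Fin l) (z : Fin l → ℂ) (t : ℂ),
      w (Dm lam t z) i = Complex.exp (t * lam i) * w z i := homog hw heq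
  -- choose N
  set i0 : Fin l := ⟨0, hlpos⟩ with hi0
  set j0 : Fin l := ⟨l - 1, by omega⟩ with hj0
  obtain ⟨N, hN'⟩ := exists_nat_gt (lam i0 / lam j0)
  have hNbig : ∀ i j : Fin l, lam i < N * lam j := by
    intro i j
    have h1 : lam i ≤ lam i0 := hdec i0 i (by simp [hi0, Fin.le_def])
    have h2 : lam j0 ≤ lam j := hdec j j0 (by simp [hj0, Fin.le_def]; omega)
    have h3 : lam i0 < N * lam j0 := by
      rw [div_lt_iff₀ (hpos j0)] at hN'
      linarith
    calc lam i ≤ lam i0 := h1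
      _ < N * lam j0 := h3
      _ ≤ N * lam j := mul_le_mul_of_nonneg_left h2 (Nat.cast_nonneg N)
  have hN0 : 0 < N := by
    rcases Nat.eq_zero_or_pos N with h | h
    · exfalso
      have := hNbig i0 i0
      rw [h] at this
      push_cast at this
      nlinarith [hpos i0]
    · exact h
  have hvan : ∀ (i j : Fin l) (n : ℕ), N ≤ n → ∀ x, hl w i j n x = 0 := by
    intro i j n hn x
    refine hl_vanish hpos hw hhom i j n ?_ x
    have h4 : (N : ℝ) * lam j ≤ n * lam j :=
      mul_le_mul_of_nonneg_right (by exact_mod_cast hn) (hpos j).le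
    have := hNbig i j
    linarith
  have hPi : ∀ i, ∃ p : MvPolynomial (Fin l) ℂ, ∀ x, w x i = MvPolynomial.eval x p :=
    fun i => exists_poly N hN0 i (fun j x => v_ident hw i j N (hvan i j) x)
  choose P hP using hPi
  have hweight : ∀ (i : Fin l) (m : Fin l →₀ ℕ), MvPolynomial.coeff m (P i) ≠ 0 →
      ∑ j : Fin l, (m j : ℝ) * lam j = lam i := by
    intro i m hm
    refine coeff_weight lam i (P i) ?_ m hm
    intro z
    have h0 : Dm lam 1 z = fun j => Complex.exp (lam j) * z j := by
      funext j; rw [Dm]; norm_num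
    rw [← h0, ← hP i, hhom i z 1, hP i]
    norm_num
  set c : Fin l → Fin l → ℂ := fun i j => MvPolynomial.coeff (Finsupp.single j 1) (P i) with hcdef
  set A : (Fin l → ℂ) →ₗ[ℂ] (Fin l → ℂ) :=
    LinearMap.pi (fun i => ∑ j, c i j • LinearMap.proj j) with hA
  have hAz : ∀ (z : Fin l → ℂ) (i : Fin l), A z i = ∑ j, c i j * z j := by
    intro z i
    rw [hA, LinearMap.pi_apply]
    simp [LinearMap.sum_apply, LinearMap.smul_apply, LinearMap.proj_apply, smul_eq_mul]
  set L : Fin l → MvPolynomial (Fin l) ℂ :=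
    fun i => ∑ j, MvPolynomial.monomial (Finsupp.single j 1) (c i j) with hLdef
  set Q : Fin l → MvPolynomial (Fin l) ℂ := fun i => P i - L i with hQdef
  have hLz : ∀ (z : Fin l → ℂ) (i : Fin l), MvPolynomial.eval z (L i) = ∑ j, c i j * z j := by
    intro z i
    rw [hLdef, map_sum]
    refine Finset.sum_congr rfl fun j _ => ?_
    rw [MvPolynomial.eval_monomial]
    simp [Finsupp.prod_single_index]
  set G : (Fin l → ℂ) → Fin l → ℂ := fun z => w z - A z with hG
  have hGz : ∀ (z : Fin l → ℂ) (i : Fin l), G z i = MvPolynomial.eval z (Q i) := by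
    intro z i
    rw [hG]
    simp only [Pi.sub_apply]
    rw [hP i, hAz, hQdef, map_sub, hLz]
  have hLcoeff : ∀ (i : Fin l) (m : Fin l →₀ ℕ), MvPolynomial.coeff m (L i)
      = ∑ j, if Finsupp.single j 1 = m then c i j else 0 := by
    intro i m
    rw [hLdef, MvPolynomial.coeff_sum]
    exact Finset.sum_congr rfl fun j _ => MvPolynomial.coeff_monomial _ _ _
  have hsupp : ∀ (i : Fin l) (m : Fin l →₀ ℕ), MvPolynomial.coeff m (Q i) ≠ 0 →
      ∀ j : Fin l, j ≤ i → m j = 0 := by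
    intro i m hm j hji
    by_contra hmj
    by_cases hsingle : ∃ j₀ : Fin l, m = Finsupp.single j₀ 1
    · obtain ⟨j₀, rfl⟩ := hsingle
      have hcL : MvPolynomial.coeff (Finsupp.single j₀ 1) (L i) = c i j₀ := by
        rw [hLcoeff]
        have hiff : ∀ j' : Fin l, (Finsupp.single j' (1 : ℕ) = Finsupp.single j₀ 1) ↔ j' = j₀ :=
          fun j' => Finsupp.single_left_inj one_ne_zero
        rw [Finset.sum_congr rfl (fun j' _ => by rw [if_congr (hiff j') rfl rfl])]
        rw [Finset.sum_ite_eq' Finset.univ j₀ (fun j' => c i j')]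
        simp
      rw [hQdef] at hm
      simp only [MvPolynomial.coeff_sub] at hm
      rw [hcL, hcdef] at hm
      exact hm (sub_self _)
    · have hcL0 : MvPolynomial.coeff m (L i) = 0 := by
        rw [hLcoeff]
        refine Finset.sum_eq_zero fun j' _ => ?_
        rw [if_neg (fun h => hsingle ⟨j', h.symm⟩)]
      have hcP : MvPolynomial.coeff m (P i) ≠ 0 := by
        rw [hQdef] at hm
        simp only [MvPolynomial.coeff_sub, hcL0, sub_zero] at hm
        exact hm
      have hwt := hweight i m hcP
      have hnn : ∀ j' ∈ Finset.univ, (0:ℝ) ≤ (m j' : ℝ) * lam j' :=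
        fun j' _ => mul_nonneg (Nat.cast_nonneg _) (hpos j').le
      have h1 : (m j : ℝ) * lam j ≤ ∑ j' : Fin l, (m j' : ℝ) * lam j' :=
        Finset.single_le_sum hnn (Finset.mem_univ j)
      have hmj1 : (1:ℝ) ≤ (m j : ℝ) := by
        exact_mod_cast Nat.one_le_iff_ne_zero.mpr hmj
      have h2 : lam j ≤ (m j : ℝ) * lam j := le_mul_of_one_le_left (hpos j).le hmj1
      have h3 : lam i ≤ lam j := hdec j i hji
      -- squeeze
      have he1 : (m j : ℝ) * lam j = lam i := by rw [hwt] at h1; linarith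
      have he2 : lam j = lam i := by linarith
      have hmj1' : (m j : ℝ) = 1 := by
        have := hpos j
        nlinarith
      have hmjnat : m j = 1 := by exact_mod_cast hmj1'
      have hrest : ∑ j' ∈ Finset.univ.erase j, (m j' : ℝ) * lam j' = 0 := by
        have hsum := Finset.add_sum_erase Finset.univ (fun j' => (m j' : ℝ) * lam j')
          (Finset.mem_univ j)
        try simp only at hsum
        linarith [hsum, he1, hwt]
      have hzero : ∀ j' ∈ Finset.univ.erase j, (m j' : ℝ) * lam j' = 0 :=
        (Finset.sum_eq_zero_iff_of_nonneg
          (fun j' hj' => hnn j' (Finset.mem_of_mem_erase hj'))).mp hrest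
      have hmz : ∀ j' : Fin l, j' ≠ j → m j' = 0 := by
        intro j' hj'
        have := hzero j' (Finset.mem_erase.mpr ⟨hj', Finset.mem_univ j'⟩)
        have hl' := hpos j'
        have : (m j' : ℝ) = 0 := by
          rcases mul_eq_zero.mp this with h | h
          · exact h
          · linarith
        exact_mod_cast this
      exact hsingle ⟨j, Finsupp.ext fun j' => by
        rcases eq_or_ne j' j with rfl | hne
        · rw [hmjnat, Finsupp.single_eq_same]
        · rw [hmz j' hne, Finsupp.single_eq_of_ne hne]⟩
  refine ⟨A, G, ?_, ?_, ?_⟩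
  · intro z
    funext k
    simp only [hG, Pi.add_apply, Pi.sub_apply]
    ring
  · intro i
    exact ⟨Q i, fun z => hGz z i⟩
  · intro i z z' hzz
    rw [hGz z i, hGz z' i]
    rw [MvPolynomial.eval_eq, MvPolynomial.eval_eq]
    refine Finset.sum_congr rfl fun d hd => ?_
    congr 1
    refine Finset.prod_congr rfl fun j hj => ?_
    have hdj : d j ≠ 0 := Finsupp.mem_support_iff.mp hj
    have hij : i < j := by
      by_contra hcon
      exact hdj (hsupp i d (MvPolynomial.mem_support_iff.mp hd) j (not_lt.mp hcon))
    rw [hzz j hij]
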